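/- arXiv:2602.01511 — 2 statements merged into one kernel-verified Lean document; each statement's English description precedes it below -/
import Mathlib

section
/- Let (R, 𝒜, ν) be a probability space, let H be a finite-dimensional real inner product space, let p : R → ℝ be measurable with 0 ≤ p(r) ≤ 1 for all r, and let u : R → H be measurable with ∫ ‖u(r)‖² dν(r) < ∞. Let μ be the probability measure on R × {0,1} determined by μ(A × {1}) = ∫_A p dν and μ(A × {0}) = ∫_A (1−p) dν, and let ĝ_B(r, b) = b • u(r). Then the total variance of ĝ_B decomposes as Var_μ(ĝ_B) := ∫ ‖ĝ_B‖² dμ − ‖∫ ĝ_B dμ‖² = ∫_R p(r)·(1−p(r))·‖u(r)‖² dν(r) + Var_ν(p • u), where Var_ν(p • u) := ∫_R ‖p(r) • u(r)‖² dν(r) − ‖∫_R p(r) • u(r) dν(r)‖². (Proposition 2: the generator's gradient variance splits into the multiplicative reward-noise term (I) and the cross-rubric inconsistency term (II).) -/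
open MeasureTheory NNReal ENNReal


private lemma strategyB_transfer_aux
    {R : Type*} [MeasurableSpace R] {ν : Measure R}
    (p : R → ℝ) (hp : Measurable p) (hp0 : ∀ r, 0 ≤ p r)
    (μ : Measure (R × Bool))
    (hm : Measure.map Prod.fst
        (μ.restrict (Set.univ ×ˢ ({true} : Set Bool)))
      = ν.withDensity (fun r => ENNReal.ofReal (p r)))
    {E : Type*} [NormedAddCommGroup E] [NormedSpace ℝ E]
    (g : R → E) (hg : StronglyMeasurable g) :
    ∫ x : R × Bool, (if x.2 then g x.1 else 0) ∂μ = ∫ r, p r • g r ∂ν := by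
  have hs : MeasurableSet ((Set.univ : Set R) ×ˢ ({true} : Set Bool)) :=
    MeasurableSet.univ.prod (measurableSet_singleton _)
  have h1 : (fun x : R × Bool => if x.2 then g x.1 else 0)
      = ((Set.univ : Set R) ×ˢ ({true} : Set Bool)).indicator (fun x => g x.1) := by
    funext ⟨r, b⟩
    cases b <;> simp [Set.indicator]
  rw [h1, integral_indicator hs, ← integral_map measurable_fst.aemeasurable
    hg.aestronglyMeasurable, hm]
  have h2 : (fun r => ENNReal.ofReal (p r))
      = fun r => ((Real.toNNReal (p r) : NNReal) : ENNReal) := rfl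
  rw [h2, integral_withDensity_eq_integral_smul (hp.real_toNNReal) g]
  refine integral_congr_ae (Filter.Eventually.of_forall fun r => ?_)
  show (Real.toNNReal (p r)) • g r = p r • g r
  rw [NNReal.smul_def, Real.coe_toNNReal _ (hp0 r)]

/-- Proposition 2 (Generator Variance under Strategy B): the total variance of
`ĝ_B(r,b) = b • u(r)` decomposes into the multiplicative reward-noise term (I)
and the cross-rubric inconsistency term (II). -/
theorem strategyB_variance_decomposition
    {R : Type*} [MeasurableSpace R] (ν : Measure R) [IsProbabilityMeasure ν]
    {H : Type*} [NormedAddCommGroup H] [InnerProductSpace ℝ H] [FiniteDimensional ℝ H]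
    [MeasurableSpace H] [BorelSpace H]
    (p : R → ℝ) (hp : Measurable p) (hp0 : ∀ r, 0 ≤ p r) (hp1 : ∀ r, p r ≤ 1)
    (u : R → H) (hu : Measurable u)
    (hu2 : Integrable (fun r => ‖u r‖ ^ 2) ν)
    (μ : Measure (R × Bool)) [IsProbabilityMeasure μ]
    (hμ1 : ∀ A : Set R, MeasurableSet A →
      μ (A ×ˢ ({true} : Set Bool)) = ∫⁻ r in A, ENNReal.ofReal (p r) ∂ν)
    (hμ0 : ∀ A : Set R, MeasurableSet A →
      μ (A ×ˢ ({false} : Set Bool)) = ∫⁻ r in A, ENNReal.ofReal (1 - p r) ∂ν) :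
    (∫ x : R × Bool, ‖(if x.2 then (1 : ℝ) else 0) • u x.1‖ ^ 2 ∂μ) -
      ‖∫ x : R × Bool, (if x.2 then (1 : ℝ) else 0) • u x.1 ∂μ‖ ^ 2 =
    (∫ r, p r * (1 - p r) * ‖u r‖ ^ 2 ∂ν) +
      ((∫ r, ‖p r • u r‖ ^ 2 ∂ν) - ‖∫ r, p r • u r ∂ν‖ ^ 2) := by
  classical
  set s : Set (R × Bool) := Set.univ ×ˢ ({true} : Set Bool) with hs_def
  have hs : MeasurableSet s := MeasurableSet.univ.prod (measurableSet_singleton _)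
  set m : Measure R := Measure.map Prod.fst (μ.restrict s) with hm_def
  have hm : m = ν.withDensity (fun r => ENNReal.ofReal (p r)) := by
    ext A hA
    rw [hm_def, Measure.map_apply measurable_fst hA,
      Measure.restrict_apply (measurable_fst hA)]
    have hset : Prod.fst ⁻¹' A ∩ s = A ×ˢ ({true} : Set Bool) := by
      ext ⟨r, b⟩
      constructor
      · rintro ⟨h1, -, h2⟩; exact ⟨h1, h2⟩
      · rintro ⟨h1, h2⟩; exact ⟨h1, Set.mem_univ _, h2⟩
    rw [hset, hμ1 A hA, withDensity_apply _ hA]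
  have hmm := hm_def.symm.trans hm
  have heq1 : (fun x : R × Bool => (if x.2 then (1 : ℝ) else 0) • u x.1)
      = fun x => if x.2 then u x.1 else 0 := by
    funext ⟨r, b⟩; cases b <;> simp
  have heq2 : (fun x : R × Bool => ‖(if x.2 then (1 : ℝ) else 0) • u x.1‖ ^ 2)
      = fun x => if x.2 then ‖u x.1‖ ^ 2 else 0 := by
    funext ⟨r, b⟩; cases b <;> simp
  have hint1 : ∫ x : R × Bool, (if x.2 then (1 : ℝ) else 0) • u x.1 ∂μ
      = ∫ r, p r • u r ∂ν := by
    rw [heq1]; exact strategyB_transfer_aux p hp hp0 μ hmm u hu.stronglyMeasurable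
  have hint2 : ∫ x : R × Bool, ‖(if x.2 then (1 : ℝ) else 0) • u x.1‖ ^ 2 ∂μ
      = ∫ r, p r * ‖u r‖ ^ 2 ∂ν := by
    have hk := strategyB_transfer_aux p hp hp0 μ hmm (fun r => ‖u r‖ ^ 2) (hu.norm.pow_const 2).stronglyMeasurable
    simp only [smul_eq_mul] at hk
    rw [heq2]
    exact hk
  rw [hint1, hint2]
  -- now pure ν-side arithmetic
  have h1 : Integrable (fun r => p r * (1 - p r) * ‖u r‖ ^ 2) ν := by
    refine hu2.mono' ((hp.mul ((measurable_const.sub hp))).mul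
      (hu.norm.pow_const 2)).aestronglyMeasurable
      (Filter.Eventually.of_forall fun r => ?_)
    have h0 : 0 ≤ p r * (1 - p r) := mul_nonneg (hp0 r) (by linarith [hp1 r])
    have hle : p r * (1 - p r) ≤ 1 := by nlinarith [hp0 r, hp1 r]
    rw [Real.norm_eq_abs, abs_of_nonneg (mul_nonneg h0 (by positivity))]
    nlinarith [sq_nonneg (‖u r‖)]
  have h2 : Integrable (fun r => ‖p r • u r‖ ^ 2) ν := by
    refine hu2.mono' ((hp.smul hu).norm.pow_const 2).aestronglyMeasurable
      (Filter.Eventually.of_forall fun r => ?_)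
    rw [Real.norm_eq_abs, abs_of_nonneg (by positivity), norm_smul,
      Real.norm_eq_abs, abs_of_nonneg (hp0 r)]
    nlinarith [sq_nonneg (‖u r‖), hp0 r, hp1 r, norm_nonneg (u r),
      mul_nonneg (mul_nonneg (sub_nonneg.2 (hp1 r))
        (by linarith [hp0 r] : (0:ℝ) ≤ 1 + p r)) (sq_nonneg ‖u r‖)]
  have hsum : ∫ r, p r * ‖u r‖ ^ 2 ∂ν
      = (∫ r, p r * (1 - p r) * ‖u r‖ ^ 2 ∂ν) + ∫ r, ‖p r • u r‖ ^ 2 ∂ν := by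
    rw [← integral_add h1 h2]
    refine integral_congr_ae (Filter.Eventually.of_forall fun r => ?_)
    show p r * ‖u r‖ ^ 2 = p r * (1 - p r) * ‖u r‖ ^ 2 + ‖p r • u r‖ ^ 2
    rw [norm_smul, Real.norm_eq_abs, abs_of_nonneg (hp0 r)]
    ring
  rw [hsum]; ring
end

section
/- Let (R, 𝒜, ν) be a probability space, let H be a finite-dimensional real inner product space, let p : R → ℝ be measurable with 0 < p(r) < 1 for ν-almost every r (and 0 ≤ p ≤ 1 everywhere), and let u, w : R → H be measurable with ∫ ‖u‖² dν < ∞ and ∫ ‖w‖² dν < ∞. Assume 0 < ∫_R p(r)²·‖u(r)‖² dν(r), set C₁ := Var_ν(p • u) / ∫_R p(r)²·‖u(r)‖² dν(r) with Var_ν(p • u) := ∫ ‖p • u‖² dν − ‖∫ p • u dν‖², and assume that for ν-almost every r, ‖w(r)‖ > 0 and ‖u(r)‖ / ‖w(r)‖ > √((1 − p(r)) / (1 − p(r) + C₁·p(r))). Let μ be the probability measure on R × {0,1} with μ(A × {1}) = ∫_A p dν and μ(A × {0}) = ∫_A (1−p) dν, and let ĝ_B(r, b) = b • u(r). Then Var_μ(ĝ_B)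 > ∫_R p(r)·(1−p(r))·‖w(r)‖² dν(r). (Theorem 1, Strict Variance Domination: under the Exploration-Gradient Sufficiency assumption, the gradient variance of Strategy B strictly dominates the expected conditional variance of Strategy A.) -/
open MeasureTheory
open scoped NNReal ENNReal

set_option maxHeartbeats 2000000

/-- Theorem 1 (Strict Variance Domination): under the Exploration-Gradient
Sufficiency assumption, the gradient variance of Strategy B strictly dominates
the expected conditional variance of Strategy A. -/
theorem strict_variance_domination
    {R : Type*} [MeasurableSpace R] (ν : Measure R) [IsProbabilityMeasure ν]
    {H : Type*} [NormedAddCommGroup H] [InnerProductSpace ℝ H] [FiniteDimensional ℝ H]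
    [MeasurableSpace H] [BorelSpace H]
    (p : R → ℝ) (hp : Measurable p) (hp0 : ∀ r, 0 ≤ p r) (hp1 : ∀ r, p r ≤ 1)
    (hp01 : ∀ᵐ r ∂ν, 0 < p r ∧ p r < 1)
    (u w : R → H) (hu : Measurable u) (hw : Measurable w)
    (hu2 : Integrable (fun r => ‖u r‖ ^ 2) ν)
    (hw2 : Integrable (fun r => ‖w r‖ ^ 2) ν)
    (hpos : 0 < ∫ r, p r ^ 2 * ‖u r‖ ^ 2 ∂ν)
    (hEGS : ∀ᵐ r ∂ν, 0 < ‖w r‖ ∧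
      ‖u r‖ / ‖w r‖ > Real.sqrt ((1 - p r) /
        (1 - p r + (((∫ s, ‖p s • u s‖ ^ 2 ∂ν) - ‖∫ s, p s • u s ∂ν‖ ^ 2) /
          (∫ s, p s ^ 2 * ‖u s‖ ^ 2 ∂ν)) * p r)))
    (μ : Measure (R × Bool)) [IsProbabilityMeasure μ]
    (hμ1 : ∀ A : Set R, MeasurableSet A →
      μ (A ×ˢ ({true} : Set Bool)) = ∫⁻ r in A, ENNReal.ofReal (p r) ∂ν)
    (hμ0 : ∀ A : Set R, MeasurableSet A →
      μ (A ×ˢ ({false} : Set Bool)) = ∫⁻ r in A, ENNReal.ofReal (1 - p r) ∂ν) :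
    (∫ x : R × Bool, ‖(if x.2 then (1 : ℝ) else 0) • u x.1‖ ^ 2 ∂μ) -
      ‖∫ x : R × Bool, (if x.2 then (1 : ℝ) else 0) • u x.1 ∂μ‖ ^ 2 >
    ∫ r, p r * (1 - p r) * ‖w r‖ ^ 2 ∂ν := by
  classical
  -- measurability of the estimator
  have hfm : Measurable fun x : R × Bool => (if x.2 then (1 : ℝ) else 0) • u x.1 :=
    ((Measurable.of_discrete (f := fun b : Bool => (if b then (1:ℝ) else 0))).comp
      measurable_snd).smul (hu.comp measurable_fst)
  set pn : R → ℝ≥0 := fun r => (p r).toNNReal with hpn_def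
  set qn : R → ℝ≥0 := fun r => (1 - p r).toNNReal with hqn_def
  have hpnm : Measurable pn := hp.real_toNNReal
  have hqnm : Measurable qn := (measurable_const.sub hp).real_toNNReal
  set νT : Measure R := ν.withDensity (fun r => (pn r : ℝ≥0∞)) with hνT
  set νF : Measure R := ν.withDensity (fun r => (qn r : ℝ≥0∞)) with hνF
  have hmt : Measurable fun r : R => (r, true) := measurable_id.prodMk measurable_const
  have hmf : Measurable fun r : R => (r, false) := measurable_id.prodMk measurable_const
  -- decomposition of μ
  have hμeq : μ = νT.map (fun r => (r, true)) + νF.map (fun r => (r, false)) := by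
    ext S hS
    have hST : MeasurableSet ((fun r : R => (r, true)) ⁻¹' S) := hmt hS
    have hSF : MeasurableSet ((fun r : R => (r, false)) ⁻¹' S) := hmf hS
    have hdecomp : S = (((fun r : R => (r, true)) ⁻¹' S) ×ˢ ({true} : Set Bool)) ∪
        (((fun r : R => (r, false)) ⁻¹' S) ×ˢ ({false} : Set Bool)) := by
      ext ⟨r, b⟩
      cases b <;> simp
    have hdisj : Disjoint (((fun r : R => (r, true)) ⁻¹' S) ×ˢ ({true} : Set Bool))
        (((fun r : R => (r, false)) ⁻¹' S) ×ˢ ({false} : Set Bool)) := by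
      rw [Set.disjoint_left]
      rintro ⟨r, b⟩ h1 h2
      simp only [Set.mem_prod, Set.mem_singleton_iff] at h1 h2
      rw [h1.2] at h2
      exact absurd h2.2 (by simp)
    rw [Measure.add_apply, Measure.map_apply hmt hS, Measure.map_apply hmf hS,
      hνT, hνF, withDensity_apply _ hST, withDensity_apply _ hSF]
    calc μ S = μ ((((fun r : R => (r, true)) ⁻¹' S) ×ˢ ({true} : Set Bool)) ∪
        (((fun r : R => (r, false)) ⁻¹' S) ×ˢ ({false} : Set Bool))) := by rw [← hdecomp]
      _ = μ (((fun r : R => (r, true)) ⁻¹' S) ×ˢ ({true} : Set Bool)) +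
          μ (((fun r : R => (r, false)) ⁻¹' S) ×ˢ ({false} : Set Bool)) :=
        measure_union hdisj (hSF.prod (MeasurableSet.singleton false))
      _ = _ := by
        rw [hμ1 _ hST, hμ0 _ hSF]
        rfl
  -- integrability facts over ν
  have hu1 : Integrable u ν :=
    ((memLp_two_iff_integrable_sq_norm hu.aestronglyMeasurable).mpr hu2).integrable one_le_two
  have hpu : Integrable (fun r => p r • u r) ν := by
    refine hu1.norm.mono' (hp.aestronglyMeasurable.smul hu.aestronglyMeasurable)
      (Filter.Eventually.of_forall fun r => ?_)
    rw [norm_smul, Real.norm_eq_abs, abs_of_nonneg (hp0 r)]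
    nlinarith [norm_nonneg (u r), hp0 r, hp1 r]
  have hpu2 : Integrable (fun r => p r * ‖u r‖ ^ 2) ν := by
    refine hu2.mono' ((hp.mul (hu.norm.pow_const 2)).aestronglyMeasurable)
      (Filter.Eventually.of_forall fun r => ?_)
    rw [Real.norm_eq_abs, abs_of_nonneg (mul_nonneg (hp0 r) (by positivity))]
    nlinarith [sq_nonneg ‖u r‖, hp0 r, hp1 r]
  have hp2u2 : Integrable (fun r => p r ^ 2 * ‖u r‖ ^ 2) ν := by
    refine hu2.mono' (((hp.pow_const 2).mul (hu.norm.pow_const 2)).aestronglyMeasurable)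
      (Filter.Eventually.of_forall fun r => ?_)
    rw [Real.norm_eq_abs, abs_of_nonneg (mul_nonneg (by positivity) (by positivity))]
    have h1 : p r ^ 2 ≤ 1 := by nlinarith [hp0 r, hp1 r]
    nlinarith [sq_nonneg ‖u r‖, h1]
  have hcoe : ∀ r, ((pn r : ℝ)) = p r := fun r => Real.coe_toNNReal _ (hp0 r)
  -- first moment of the estimator
  have hintT : Integrable (fun x : R × Bool => (if x.2 then (1 : ℝ) else 0) • u x.1)
      (νT.map (fun r => (r, true))) := by
    rw [integrable_map_measure hfm.aestronglyMeasurable hmt.aemeasurable]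
    have : ((fun x : R × Bool => (if x.2 then (1 : ℝ) else 0) • u x.1) ∘ (fun r : R => (r, true)))
        = u := by funext r; simp
    rw [this, hνT, integrable_withDensity_iff_integrable_smul hpnm]
    exact hpu.congr (Filter.Eventually.of_forall fun r =>
      show p r • u r = pn r • u r by rw [NNReal.smul_def, hcoe r])
  have hintF : Integrable (fun x : R × Bool => (if x.2 then (1 : ℝ) else 0) • u x.1)
      (νF.map (fun r => (r, false))) := by
    rw [integrable_map_measure hfm.aestronglyMeasurable hmf.aemeasurable]
    have : ((fun x : R × Bool => (if x.2 then (1 : ℝ) else 0) • u x.1) ∘ (fun r : R => (r, false)))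
        = fun _ => (0 : H) := by funext r; simp
    rw [this]
    exact integrable_zero _ _ _
  have hT_int_eq : ∫ r, u r ∂νT = ∫ r, p r • u r ∂ν := by
    rw [hνT, integral_withDensity_eq_integral_smul hpnm]
    exact integral_congr_ae (Filter.Eventually.of_forall fun r =>
      show pn r • u r = p r • u r by rw [NNReal.smul_def, hcoe r])
  have hmean : ∫ x : R × Bool, (if x.2 then (1 : ℝ) else 0) • u x.1 ∂μ
      = ∫ r, p r • u r ∂ν := by
    rw [hμeq, integral_add_measure hintT hintF,
      integral_map hmt.aemeasurable hfm.aestronglyMeasurable,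
      integral_map hmf.aemeasurable hfm.aestronglyMeasurable]
    have e1 : ∫ x, (if ((x, true) : R × Bool).2 then (1 : ℝ) else 0) • u ((x, true) : R × Bool).1 ∂νT
        = ∫ r, u r ∂νT := by
      refine integral_congr_ae (Filter.Eventually.of_forall fun x => ?_)
      simp
    have e2 : ∫ x, (if ((x, false) : R × Bool).2 then (1 : ℝ) else 0) • u ((x, false) : R × Bool).1 ∂νF
        = 0 := by
      have : ∀ x : R, (if ((x, false) : R × Bool).2 then (1 : ℝ) else 0) • u ((x, false) : R × Bool).1 = 0 := by
        intro x; simp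
      simp only [this, integral_zero]
    rw [e1, e2, add_zero, hT_int_eq]
  -- second moment of the estimator
  have hFm : Measurable fun x : R × Bool => ‖(if x.2 then (1 : ℝ) else 0) • u x.1‖ ^ 2 :=
    (hfm.norm).pow_const 2
  have hintT2 : Integrable (fun x : R × Bool => ‖(if x.2 then (1 : ℝ) else 0) • u x.1‖ ^ 2)
      (νT.map (fun r => (r, true))) := by
    rw [integrable_map_measure hFm.aestronglyMeasurable hmt.aemeasurable]
    have : ((fun x : R × Bool => ‖(if x.2 then (1 : ℝ) else 0) • u x.1‖ ^ 2) ∘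
        (fun r : R => (r, true))) = fun r => ‖u r‖ ^ 2 := by funext r; simp
    rw [this, hνT, integrable_withDensity_iff_integrable_smul hpnm]
    exact hpu2.congr (Filter.Eventually.of_forall fun r =>
      show p r * ‖u r‖ ^ 2 = pn r • ‖u r‖ ^ 2 by
        rw [NNReal.smul_def, hcoe r, smul_eq_mul])
  have hintF2 : Integrable (fun x : R × Bool => ‖(if x.2 then (1 : ℝ) else 0) • u x.1‖ ^ 2)
      (νF.map (fun r => (r, false))) := by
    rw [integrable_map_measure hFm.aestronglyMeasurable hmf.aemeasurable]
    have : ((fun x : R × Bool => ‖(if x.2 then (1 : ℝ) else 0) • u x.1‖ ^ 2) ∘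
        (fun r : R => (r, false))) = fun _ => (0 : ℝ) := by funext r; simp
    rw [this]
    exact integrable_zero _ _ _
  have hT_int_eq2 : ∫ r, ‖u r‖ ^ 2 ∂νT = ∫ r, p r * ‖u r‖ ^ 2 ∂ν := by
    rw [hνT, integral_withDensity_eq_integral_smul hpnm]
    exact integral_congr_ae (Filter.Eventually.of_forall fun r =>
      show pn r • ‖u r‖ ^ 2 = p r * ‖u r‖ ^ 2 by
        rw [NNReal.smul_def, hcoe r, smul_eq_mul])
  have hsecond : ∫ x : R × Bool, ‖(if x.2 then (1 : ℝ) else 0) • u x.1‖ ^ 2 ∂μ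
      = ∫ r, p r * ‖u r‖ ^ 2 ∂ν := by
    rw [hμeq, integral_add_measure hintT2 hintF2,
      integral_map hmt.aemeasurable hFm.aestronglyMeasurable,
      integral_map hmf.aemeasurable hFm.aestronglyMeasurable]
    have e1 : ∫ x, ‖(if ((x, true) : R × Bool).2 then (1 : ℝ) else 0) • u ((x, true) : R × Bool).1‖ ^ 2 ∂νT
        = ∫ r, ‖u r‖ ^ 2 ∂νT := by
      refine integral_congr_ae (Filter.Eventually.of_forall fun x => ?_)
      simp
    have e2 : ∫ x, ‖(if ((x, false) : R × Bool).2 then (1 : ℝ) else 0) • u ((x, false) : R × Bool).1‖ ^ 2 ∂νF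
        = 0 := by
      have : ∀ x : R, ‖(if ((x, false) : R × Bool).2 then (1 : ℝ) else 0) • u ((x, false) : R × Bool).1‖ ^ 2 = 0 := by
        intro x; simp
      simp only [this, integral_zero]
    rw [e1, e2, add_zero, hT_int_eq2]
  rw [hmean, hsecond]
  set J := ∫ r, p r * ‖u r‖ ^ 2 ∂ν with hJ
  set I := ∫ r, p r ^ 2 * ‖u r‖ ^ 2 ∂ν with hI
  set M := ‖∫ r, p r • u r ∂ν‖ ^ 2 with hM
  have ipuu : (∫ s, ‖p s • u s‖ ^ 2 ∂ν) = I := by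
    rw [hI]
    refine integral_congr_ae (Filter.Eventually.of_forall fun s => ?_)
    show ‖p s • u s‖ ^ 2 = p s ^ 2 * ‖u s‖ ^ 2
    rw [norm_smul, Real.norm_eq_abs, mul_pow, sq_abs]
  rw [ipuu] at hEGS
  set C := (I - M) / I with hC
  -- variance nonnegativity gives M ≤ I
  have hXint2 : Integrable (fun r => (p r * ‖u r‖) ^ 2) ν :=
    hp2u2.congr (Filter.Eventually.of_forall fun r => by ring)
  have hmem : MemLp (fun r => p r * ‖u r‖) 2 ν :=
    (memLp_two_iff_integrable_sq (hp.mul hu.norm).aestronglyMeasurable).mpr hXint2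
  have hvar := ProbabilityTheory.variance_nonneg (fun r => p r * ‖u r‖) ν
  rw [ProbabilityTheory.variance_eq_sub hmem] at hvar
  have hsq_eq : ∫ x, ((fun r => p r * ‖u r‖) ^ 2) x ∂ν = I := by
    rw [hI]
    refine integral_congr_ae (Filter.Eventually.of_forall fun x => ?_)
    simp only [Pi.pow_apply]
    ring
  rw [hsq_eq] at hvar
  have hXnn : 0 ≤ ∫ x, p x * ‖u x‖ ∂ν :=
    integral_nonneg fun x => mul_nonneg (hp0 x) (norm_nonneg _)
  have hnorm_le : ‖∫ r, p r • u r ∂ν‖ ≤ ∫ x, p x * ‖u x‖ ∂ν := by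
    refine (norm_integral_le_integral_norm _).trans_eq ?_
    refine integral_congr_ae (Filter.Eventually.of_forall fun x => ?_)
    show ‖p x • u x‖ = p x * ‖u x‖
    rw [norm_smul, Real.norm_eq_abs, abs_of_nonneg (hp0 x)]
  have hMI : M ≤ I := by
    have h1 : M ≤ (∫ x, p x * ‖u x‖ ∂ν) ^ 2 := by
      rw [hM]; exact pow_le_pow_left₀ (norm_nonneg _) hnorm_le 2
    linarith
  have hC0 : 0 ≤ C := div_nonneg (by linarith) hpos.le
  -- pointwise a.e. strict inequality
  have hae : ∀ᵐ r ∂ν, p r * (1 - p r) * ‖w r‖ ^ 2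
      < p r * (1 - p r) * ‖u r‖ ^ 2 + C * (p r ^ 2 * ‖u r‖ ^ 2) := by
    filter_upwards [hp01, hEGS] with r hr he
    obtain ⟨hw0, hsq⟩ := he
    have hD : 0 < 1 - p r + C * p r := by nlinarith [mul_nonneg hC0 hr.1.le, hr.2]
    have h1 : (1 - p r) / (1 - p r + C * p r) < (‖u r‖ / ‖w r‖) ^ 2 := by
      have h0 : 0 < ‖u r‖ / ‖w r‖ := lt_of_le_of_lt (Real.sqrt_nonneg _) hsq
      exact (Real.sqrt_lt' h0).mp hsq
    rw [div_pow, div_lt_div_iff₀ hD (by positivity)] at h1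
    nlinarith [mul_lt_mul_of_pos_left h1 hr.1]
  -- integrability of the comparison functions
  have hgint1 : Integrable (fun r => p r * (1 - p r) * ‖u r‖ ^ 2) ν := by
    refine hu2.mono' (((hp.mul (measurable_const.sub hp)).mul
      (hu.norm.pow_const 2)).aestronglyMeasurable) (Filter.Eventually.of_forall fun r => ?_)
    have hb : p r * (1 - p r) ≤ 1 := by nlinarith [hp0 r, hp1 r]
    have hb0 : 0 ≤ p r * (1 - p r) := mul_nonneg (hp0 r) (by linarith [hp1 r])
    rw [Real.norm_eq_abs, abs_of_nonneg (mul_nonneg hb0 (by positivity))]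
    nlinarith [mul_nonneg (sub_nonneg.mpr hb) (sq_nonneg ‖u r‖)]
  have hhint : Integrable (fun r => p r * (1 - p r) * ‖w r‖ ^ 2) ν := by
    refine hw2.mono' (((hp.mul (measurable_const.sub hp)).mul
      (hw.norm.pow_const 2)).aestronglyMeasurable) (Filter.Eventually.of_forall fun r => ?_)
    have hb : p r * (1 - p r) ≤ 1 := by nlinarith [hp0 r, hp1 r]
    have hb0 : 0 ≤ p r * (1 - p r) := mul_nonneg (hp0 r) (by linarith [hp1 r])
    rw [Real.norm_eq_abs, abs_of_nonneg (mul_nonneg hb0 (by positivity))]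
    nlinarith [mul_nonneg (sub_nonneg.mpr hb) (sq_nonneg ‖w r‖)]
  have hgint : Integrable
      (fun r => p r * (1 - p r) * ‖u r‖ ^ 2 + C * (p r ^ 2 * ‖u r‖ ^ 2)) ν :=
    hgint1.add (hp2u2.const_mul C)
  -- strict integral inequality
  have hlt : ∫ r, p r * (1 - p r) * ‖w r‖ ^ 2 ∂ν
      < ∫ r, (p r * (1 - p r) * ‖u r‖ ^ 2 + C * (p r ^ 2 * ‖u r‖ ^ 2)) ∂ν := by
    have hdiff : 0 < ∫ r, ((p r * (1 - p r) * ‖u r‖ ^ 2 + C * (p r ^ 2 * ‖u r‖ ^ 2))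
        - p r * (1 - p r) * ‖w r‖ ^ 2) ∂ν := by
      refine (integral_pos_iff_support_of_nonneg_ae ?_ (hgint.sub hhint)).mpr ?_
      · filter_upwards [hae] with r hr
        show (0:ℝ) ≤ (p r * (1 - p r) * ‖u r‖ ^ 2 + C * (p r ^ 2 * ‖u r‖ ^ 2))
          - p r * (1 - p r) * ‖w r‖ ^ 2
        linarith
      · have hnull : ν (Function.support fun r =>
            (p r * (1 - p r) * ‖u r‖ ^ 2 + C * (p r ^ 2 * ‖u r‖ ^ 2))
              - p r * (1 - p r) * ‖w r‖ ^ 2)ᶜ = 0 := by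
          refine measure_mono_null ?_ (ae_iff.mp hae)
          intro r hr
          simp only [Set.mem_compl_iff, Function.mem_support, not_not] at hr
          simp only [Set.mem_setOf_eq, not_lt]
          linarith
        have h1 : (1 : ℝ≥0∞) ≤ ν (Function.support fun r =>
            (p r * (1 - p r) * ‖u r‖ ^ 2 + C * (p r ^ 2 * ‖u r‖ ^ 2))
              - p r * (1 - p r) * ‖w r‖ ^ 2) := by
          have h2 := measure_union_le (μ := ν) (Function.support fun r =>
            (p r * (1 - p r) * ‖u r‖ ^ 2 + C * (p r ^ 2 * ‖u r‖ ^ 2))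
              - p r * (1 - p r) * ‖w r‖ ^ 2) (Function.support fun r =>
            (p r * (1 - p r) * ‖u r‖ ^ 2 + C * (p r ^ 2 * ‖u r‖ ^ 2))
              - p r * (1 - p r) * ‖w r‖ ^ 2)ᶜ
          rw [Set.union_compl_self, hnull, add_zero, measure_univ] at h2
          exact h2
        exact lt_of_lt_of_le (by norm_num) h1
    rw [integral_sub hgint hhint] at hdiff
    linarith
  -- compute the right-hand integral
  have hsum : ∫ r, (p r * (1 - p r) * ‖u r‖ ^ 2 + C * (p r ^ 2 * ‖u r‖ ^ 2)) ∂ν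
      = (J - I) + C * I := by
    rw [integral_add hgint1 (hp2u2.const_mul C), integral_const_mul C]
    congr 1
    rw [hJ, hI, ← integral_sub hpu2 hp2u2]
    refine integral_congr_ae (Filter.Eventually.of_forall fun r => ?_)
    show p r * (1 - p r) * ‖u r‖ ^ 2 = p r * ‖u r‖ ^ 2 - p r ^ 2 * ‖u r‖ ^ 2
    ring
  have hCI : C * I = I - M := by
    rw [hC, div_mul_cancel₀ _ (ne_of_gt hpos)]
  rw [hsum, hCI] at hlt
  linarith
end
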